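/- Fix a positive integer n and a real t ≥ 1/2. The function σ ↦ (2n/(2n+1))^(1-2σ) · sqrt(((2n+1-σ)² + t²)/((2n+σ)² + t²)) is strictly increasing on (0, 1/2). -/

import Mathlib

set_option maxHeartbeats 1000000

theorem log_quartic_lt (x : ℝ) (hx : 0 < x) :
    x - x^2/2 + x^3/3 - x^4/4 < Real.log (1 + x) := by
  have key : StrictMonoOn
      (fun y : ℝ => Real.log (1 + y) - (y - y^2/2 + y^3/3 - y^4/4)) (Set.Ici 0) := by
    apply strictMonoOn_of_deriv_pos (convex_Ici 0)
    · apply ContinuousOn.sub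
      · apply ContinuousOn.log (by fun_prop)
        intro y hy
        simp only [Set.mem_Ici] at hy
        positivity
      · fun_prop
    · intro y hy
      rw [interior_Ici, Set.mem_Ioi] at hy
      have h1y : (0:ℝ) < 1 + y := by linarith
      have hd : HasDerivAt (fun y : ℝ => Real.log (1 + y) - (y - y^2/2 + y^3/3 - y^4/4))
          (1/(1+y) - (1 - y + y^2 - y^3)) y := by
        have hlog : HasDerivAt (fun y : ℝ => Real.log (1 + y)) (1/(1+y)) y := by
          have := ((hasDerivAt_id y).const_add 1).log (ne_of_gt h1y)
          simpa using this
        have hpoly : HasDerivAt (fun y : ℝ => y - y^2/2 + y^3/3 - y^4/4)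
            (1 - y + y^2 - y^3) y := by
          have h := (((((hasDerivAt_id y).sub (((hasDerivAt_id y).pow 2).div_const 2)).add
            (((hasDerivAt_id y).pow 3).div_const 3)).sub
            (((hasDerivAt_id y).pow 4).div_const 4)))
          refine h.congr_deriv ?_
          simp only [id]
          push_cast
          ring
        exact hlog.sub hpoly
      rw [hd.deriv]
      have : 1/(1+y) - (1 - y + y^2 - y^3) = y^4/(1+y) := by
        field_simp; ring
      rw [this]
      positivity
  have h0 : (0:ℝ) ∈ Set.Ici (0:ℝ) := Set.self_mem_Ici
  have hx' : x ∈ Set.Ici (0:ℝ) := le_of_lt hx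
  have := key h0 hx' hx
  simp at this
  linarith

theorem aux1' (a σ : ℝ) (ha : 1 ≤ a) (h1 : 0 ≤ σ) (h2 : σ ≤ 1/2) :
    (2*a+1-σ)/((2*a+1-σ)^2+1/4) + (2*a+σ)/((2*a+σ)^2+1/4)
      ≤ (2*a+1)/((2*a+1)^2+1/4) + (2*a)/((2*a)^2+1/4) := by
  have hb : (0:ℝ) ≤ a - 1 := by linarith
  have hw : (0:ℝ) ≤ 1 - 2*σ := by linarith
  have hAu : (0:ℝ) < (2*a+1-σ)^2+1/4 := by positivity
  have hAv : (0:ℝ) < (2*a+σ)^2+1/4 := by positivity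
  have hA0 : (0:ℝ) < (2*a+1)^2+1/4 := by positivity
  have hB0 : (0:ℝ) < (2*a)^2+1/4 := by positivity
  rw [div_add_div _ _ (ne_of_gt hAu) (ne_of_gt hAv),
      div_add_div _ _ (ne_of_gt hA0) (ne_of_gt hB0),
      div_le_div_iff₀ (by positivity) (by positivity)]
  linarith [mul_nonneg (mul_nonneg (pow_nonneg hb 0) (pow_nonneg h1 1)) (pow_nonneg hw 3),
    mul_nonneg (mul_nonneg (pow_nonneg hb 0) (pow_nonneg h1 2)) (pow_nonneg hw 2),
    mul_nonneg (mul_nonneg (pow_nonneg hb 0) (pow_nonneg h1 3)) (pow_nonneg hw 1),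
    mul_nonneg (mul_nonneg (pow_nonneg hb 0) (pow_nonneg h1 4)) (pow_nonneg hw 0),
    mul_nonneg (mul_nonneg (pow_nonneg hb 1) (pow_nonneg h1 1)) (pow_nonneg hw 3),
    mul_nonneg (mul_nonneg (pow_nonneg hb 1) (pow_nonneg h1 2)) (pow_nonneg hw 2),
    mul_nonneg (mul_nonneg (pow_nonneg hb 1) (pow_nonneg h1 3)) (pow_nonneg hw 1),
    mul_nonneg (mul_nonneg (pow_nonneg hb 1) (pow_nonneg h1 4)) (pow_nonneg hw 0),
    mul_nonneg (mul_nonneg (pow_nonneg hb 2) (pow_nonneg h1 1)) (pow_nonneg hw 3),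
    mul_nonneg (mul_nonneg (pow_nonneg hb 2) (pow_nonneg h1 2)) (pow_nonneg hw 2),
    mul_nonneg (mul_nonneg (pow_nonneg hb 2) (pow_nonneg h1 3)) (pow_nonneg hw 1),
    mul_nonneg (mul_nonneg (pow_nonneg hb 2) (pow_nonneg h1 4)) (pow_nonneg hw 0),
    mul_nonneg (mul_nonneg (pow_nonneg hb 3) (pow_nonneg h1 1)) (pow_nonneg hw 3),
    mul_nonneg (mul_nonneg (pow_nonneg hb 3) (pow_nonneg h1 2)) (pow_nonneg hw 2),
    mul_nonneg (mul_nonneg (pow_nonneg hb 3) (pow_nonneg h1 3)) (pow_nonneg hw 1),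
    mul_nonneg (mul_nonneg (pow_nonneg hb 3) (pow_nonneg h1 4)) (pow_nonneg hw 0),
    mul_nonneg (mul_nonneg (pow_nonneg hb 4) (pow_nonneg h1 1)) (pow_nonneg hw 3),
    mul_nonneg (mul_nonneg (pow_nonneg hb 4) (pow_nonneg h1 2)) (pow_nonneg hw 2),
    mul_nonneg (mul_nonneg (pow_nonneg hb 4) (pow_nonneg h1 3)) (pow_nonneg hw 1),
    mul_nonneg (mul_nonneg (pow_nonneg hb 4) (pow_nonneg h1 4)) (pow_nonneg hw 0),
    mul_nonneg (mul_nonneg (pow_nonneg hb 5) (pow_nonneg h1 1)) (pow_nonneg hw 3),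
    mul_nonneg (mul_nonneg (pow_nonneg hb 5) (pow_nonneg h1 2)) (pow_nonneg hw 2),
    mul_nonneg (mul_nonneg (pow_nonneg hb 5) (pow_nonneg h1 3)) (pow_nonneg hw 1),
    mul_nonneg (mul_nonneg (pow_nonneg hb 5) (pow_nonneg h1 4)) (pow_nonneg hw 0)]

theorem aux2' (a : ℝ) (ha : 1 ≤ a) :
    (2*a+1)/((2*a+1)^2+1/4) + (2*a)/((2*a)^2+1/4)
      ≤ 1/a - 1/(4*a^2) + 1/(12*a^3) - 1/(32*a^4) := by
  have hb : (0:ℝ) ≤ a - 1 := by linarith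
  have ha0 : (0:ℝ) < a := by linarith
  have hA0 : (0:ℝ) < (2*a+1)^2+1/4 := by positivity
  have hB0 : (0:ℝ) < (2*a)^2+1/4 := by positivity
  have hP : 1/a - 1/(4*a^2) + 1/(12*a^3) - 1/(32*a^4)
      = (96*a^3 - 24*a^2 + 8*a - 3)/(96*a^4) := by
    field_simp; ring
  rw [hP, div_add_div _ _ (ne_of_gt hA0) (ne_of_gt hB0),
      div_le_div_iff₀ (by positivity) (by positivity)]
  linarith [pow_nonneg hb 0, pow_nonneg hb 1, pow_nonneg hb 2, pow_nonneg hb 3,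
    pow_nonneg hb 4, pow_nonneg hb 5]

theorem h2n_strictMonoOn (n : ℕ) (hn : 0 < n) (t : ℝ) (ht : 1 / 2 ≤ t) :
    StrictMonoOn
      (fun σ : ℝ => ((2 * (n : ℝ)) / (2 * n + 1)) ^ (1 - 2 * σ) *
        Real.sqrt (((2 * (n : ℝ) + 1 - σ) ^ 2 + t ^ 2) /
          ((2 * (n : ℝ) + σ) ^ 2 + t ^ 2)))
      (Set.Ioo 0 (1 / 2)) := by
  have ha : (1:ℝ) ≤ (n:ℝ) := by exact_mod_cast hn
  have han : (0:ℝ) < (n:ℝ) := by linarith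
  have ht0 : (0:ℝ) < t := lt_of_lt_of_le (by norm_num) ht
  have hc : (0:ℝ) < 2*(n:ℝ)/(2*(n:ℝ)+1) := by positivity
  have hN : ∀ σ:ℝ, (0:ℝ) < (2*(n:ℝ)+1-σ)^2+t^2 := fun σ => by positivity
  have hD : ∀ σ:ℝ, (0:ℝ) < (2*(n:ℝ)+σ)^2+t^2 := fun σ => by positivity
  set C : ℝ := Real.log (2*(n:ℝ)/(2*(n:ℝ)+1)) with hC
  set L : ℝ → ℝ := fun σ => (1 - 2*σ) * C +
      (1/2) * (Real.log ((2*(n:ℝ)+1-σ)^2+t^2) - Real.log ((2*(n:ℝ)+σ)^2+t^2)) with hLdef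
  have hfeq : ∀ σ:ℝ, ((2 * (n : ℝ)) / (2 * n + 1)) ^ (1 - 2 * σ) *
        Real.sqrt (((2 * (n : ℝ) + 1 - σ) ^ 2 + t ^ 2) /
          ((2 * (n : ℝ) + σ) ^ 2 + t ^ 2)) = Real.exp (L σ) := by
    intro σ
    rw [Real.rpow_def_of_pos hc, Real.sqrt_eq_rpow,
        Real.rpow_def_of_pos (div_pos (hN σ) (hD σ)), ← Real.exp_add,
        Real.log_div (ne_of_gt (hN σ)) (ne_of_gt (hD σ))]
    congr 1
    ring
  have hL' : ∀ σ:ℝ, HasDerivAt L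
      (2*Real.log ((2*(n:ℝ)+1)/(2*(n:ℝ)))
        - (2*(n:ℝ)+1-σ)/((2*(n:ℝ)+1-σ)^2+t^2)
        - (2*(n:ℝ)+σ)/((2*(n:ℝ)+σ)^2+t^2)) σ := by
    intro σ
    have hlin : HasDerivAt (fun x:ℝ => 1 - 2*x) (-2) σ := by
      simpa using ((hasDerivAt_id σ).const_mul 2).const_sub 1
    have h1 : HasDerivAt (fun x:ℝ => (1 - 2*x) * C) ((-2) * C) σ := hlin.mul_const C
    have h2 : HasDerivAt (fun x:ℝ => (2*(n:ℝ)+1-x)^2 + t^2) (2*(2*(n:ℝ)+1-σ)*(-1)) σ := by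
      have := (((hasDerivAt_id σ).const_sub (2*(n:ℝ)+1)).pow 2).add_const (t^2)
      refine this.congr_deriv ?_
      simp only [id]
      push_cast
      ring
    have h3 : HasDerivAt (fun x:ℝ => (2*(n:ℝ)+x)^2 + t^2) (2*(2*(n:ℝ)+σ)) σ := by
      have := (((hasDerivAt_id σ).const_add (2*(n:ℝ))).pow 2).add_const (t^2)
      refine this.congr_deriv ?_
      simp only [id]
      push_cast
      ring
    have hlog2 := h2.log (ne_of_gt (hN σ))
    have hlog3 := h3.log (ne_of_gt (hD σ))
    have total := h1.add ((hlog2.sub hlog3).const_mul (1/2))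
    have hClog : Real.log ((2*(n:ℝ)+1)/(2*(n:ℝ))) = - C := by
      rw [hC, ← Real.log_inv]
      congr 1
      rw [inv_div]
    refine total.congr_deriv ?_
    rw [hClog]
    ring
  have hLmono : StrictMonoOn L (Set.Ioo 0 (1/2)) := by
    apply strictMonoOn_of_deriv_pos (convex_Ioo _ _)
    · exact Continuous.continuousOn
        (continuous_iff_continuousAt.2 fun σ => (hL' σ).continuousAt)
    · intro σ hσ
      rw [interior_Ioo] at hσ
      obtain ⟨hσ0, hσh⟩ := hσ
      rw [(hL' σ).deriv]
      have hx : (0:ℝ) < 1/(2*(n:ℝ)) := by positivity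
      have hq := log_quartic_lt _ hx
      have heq1 : (2*(n:ℝ)+1)/(2*(n:ℝ)) = 1 + 1/(2*(n:ℝ)) := by field_simp
      have heq2 : 2*(1/(2*(n:ℝ)) - (1/(2*(n:ℝ)))^2/2 + (1/(2*(n:ℝ)))^3/3 - (1/(2*(n:ℝ)))^4/4)
          = 1/(n:ℝ) - 1/(4*(n:ℝ)^2) + 1/(12*(n:ℝ)^3) - 1/(32*(n:ℝ)^4) := by
        field_simp
        ring
      have hlog_gt : 2*Real.log ((2*(n:ℝ)+1)/(2*(n:ℝ)))
          > 1/(n:ℝ) - 1/(4*(n:ℝ)^2) + 1/(12*(n:ℝ)^3) - 1/(32*(n:ℝ)^4) := by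
        rw [heq1, ← heq2]
        linarith
      have h2' := aux2' (n:ℝ) ha
      have h1' := aux1' (n:ℝ) σ ha (le_of_lt hσ0) (le_of_lt hσh)
      have ht2 : (1:ℝ)/4 ≤ t^2 := by nlinarith
      have hu : (2*(n:ℝ)+1-σ)/((2*(n:ℝ)+1-σ)^2+t^2) ≤ (2*(n:ℝ)+1-σ)/((2*(n:ℝ)+1-σ)^2+1/4) := by
        rw [div_le_div_iff₀ (hN σ) (by positivity)]
        have hfact : (0:ℝ) ≤ (2*(n:ℝ)+1-σ)*(t^2-1/4) :=
          mul_nonneg (by linarith) (by linarith)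
        nlinarith [hfact]
      have hv : (2*(n:ℝ)+σ)/((2*(n:ℝ)+σ)^2+t^2) ≤ (2*(n:ℝ)+σ)/((2*(n:ℝ)+σ)^2+1/4) := by
        rw [div_le_div_iff₀ (hD σ) (by positivity)]
        have hfact : (0:ℝ) ≤ (2*(n:ℝ)+σ)*(t^2-1/4) :=
          mul_nonneg (by linarith) (by linarith)
        nlinarith [hfact]
      linarith
  intro x hx y hy hxy
  simp only
  rw [hfeq x, hfeq y]
  exact Real.exp_lt_exp.2 (hLmono hx hy hxy)
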